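/- Let X₁,…,X_r be i.i.d. Bin(n,p), 0 < p < 1, Z = min_i X_i, δ ∈ (0,1). Suppose there exists a ∈ [0,p) with KL(a‖p) = (log₂ r + log₂(2/δ) + 4 log₂(n+1) + max(0, log₂(p/(1-p))))/n. Then P(Z < a·n) ≤ δ/2. -/

import Mathlib

set_option maxHeartbeats 1000000

open MeasureTheory ProbabilityTheory

/-- Binary KL divergence in bits: KL(a‖p) (conventions 0·log 0 = 0 hold since Real.log 0 = 0). -/
noncomputable def klB (a p : ℝ) : ℝ :=
  a * Real.logb 2 (a / p) + (1 - a) * Real.logb 2 ((1 - a) / (1 - p))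

/-- P(Bin(n,p) = k). -/
noncomputable def binPMF (n k : ℕ) (p : ℝ) : ℝ :=
  (n.choose k : ℝ) * p ^ k * (1 - p) ^ (n - k)

lemma binPMF_nonneg {n k : ℕ} {p : ℝ} (h0 : 0 ≤ p) (h1 : p ≤ 1) :
    0 ≤ binPMF n k p := by
  unfold binPMF
  have : (0:ℝ) ≤ 1 - p := by linarith
  positivity

/-- Step monotonicity of the binomial pmf below the mean. -/
lemma binPMF_step {n k : ℕ} {p : ℝ} (hp : 0 < p) (hp1 : p < 1)
    (hk : ((k:ℝ) + 1) ≤ p * n) : binPMF n k p ≤ binPMF n (k + 1) p := by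
  have hkn : k + 1 ≤ n := by
    have hn : ((k:ℝ) + 1) < n := by
      nlinarith [hp1, hk, Nat.cast_nonneg (α := ℝ) n]
    exact_mod_cast hn.le
  have hkn' : k ≤ n := by omega
  unfold binPMF
  have hsub : n - k = (n - (k+1)) + 1 := by omega
  rw [hsub, pow_succ]
  have key : (n.choose k : ℝ) * (1 - p) ≤ (n.choose (k+1) : ℝ) * p := by
    have hcp : (0:ℝ) < (k:ℝ) + 1 := by positivity
    rw [← mul_le_mul_iff_of_pos_right hcp]
    have hch : ((n.choose (k+1) : ℝ)) * ((k:ℝ)+1) = (n.choose k : ℝ) * ((n:ℝ) - k) := by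
      have := Nat.choose_succ_right_eq n k
      have h2 : ((n.choose (k+1) * (k+1) : ℕ) : ℝ) = ((n.choose k * (n - k) : ℕ) : ℝ) := by
        exact_mod_cast congrArg (Nat.cast (R := ℝ)) this
      push_cast [Nat.cast_sub hkn'] at h2
      linarith [h2]
    have : (n.choose (k+1) : ℝ) * p * ((k:ℝ)+1) = (n.choose k : ℝ) * ((n:ℝ) - k) * p := by
      nlinarith [hch]
    rw [this]
    have hineq : (1 - p) * ((k:ℝ) + 1) ≤ ((n:ℝ) - k) * p := by nlinarith
    have hcnn : (0:ℝ) ≤ (n.choose k : ℝ) := Nat.cast_nonneg _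
    nlinarith [hineq, hcnn]
  have hnn1 : (0:ℝ) ≤ p ^ k := by positivity
  have hnn2 : (0:ℝ) ≤ (1 - p) ^ (n - (k+1)) := by
    have : (0:ℝ) ≤ 1 - p := by linarith
    positivity
  calc (n.choose k : ℝ) * p ^ k * ((1 - p) ^ (n - (k+1)) * (1 - p))
      = ((n.choose k : ℝ) * (1 - p)) * (p ^ k * (1 - p) ^ (n - (k+1))) := by ring
    _ ≤ ((n.choose (k+1) : ℝ) * p) * (p ^ k * (1 - p) ^ (n - (k+1))) := by
        apply mul_le_mul_of_nonneg_right key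
        positivity
    _ = (n.choose (k+1) : ℝ) * p ^ (k+1) * (1 - p) ^ (n - (k+1)) := by ring

theorem min_binomial_upper_event (r n : ℕ) (p δ a : ℝ)
    (hp : 0 < p) (hp1 : p < 1) (hδ0 : 0 < δ) (hδ1 : δ < 1)
    (ha : a ∈ Set.Ico (0 : ℝ) p)
    (hkla : klB a p = (Real.logb 2 r + Real.logb 2 (2 / δ)
      + 4 * Real.logb 2 ((n : ℝ) + 1) + max 0 (Real.logb 2 (p / (1 - p)))) / n)
    (Ω : Type*) [MeasurableSpace Ω] (μ : Measure Ω) [IsProbabilityMeasure μ]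
    (X : Fin r → Ω → ℕ) (hXm : ∀ i, Measurable (X i))
    (hindep : iIndepFun X μ)
    (hmarg : ∀ i k, μ {ω | X i ω = k} = ENNReal.ofReal (binPMF n k p)) :
    (μ {ω | ∃ i, (X i ω : ℝ) < a * n}).toReal ≤ δ / 2 := by
  obtain ⟨ha0, hap⟩ := ha
  -- trivial case r = 0
  rcases Nat.eq_zero_or_pos r with hr | hr
  · subst hr
    have : {ω | ∃ i : Fin 0, (X i ω : ℝ) < a * n} = ∅ := by
      ext ω; simp [Fin.isEmpty.false]
    rw [this, measure_empty]
    simp; positivity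
  -- trivial case a * n ≤ 0
  rcases le_or_gt (a * n) 0 with han | han
  · have : {ω | ∃ i, (X i ω : ℝ) < a * n} = ∅ := by
      ext ω
      simp only [Set.mem_setOf_eq, Set.mem_empty_iff_false, iff_false, not_exists, not_lt]
      intro i
      exact le_trans han (Nat.cast_nonneg _)
    rw [this, measure_empty]
    simp; positivity
  -- main case
  have ha0' : 0 < a := by
    rcases lt_or_eq_of_le ha0 with h | h
    · exact h
    · exfalso; rw [← h] at han; simp at han
  have hn0 : 0 < (n:ℝ) := by
    by_contra h
    push_neg at h
    have : (n:ℝ) = 0 := le_antisymm h (Nat.cast_nonneg _)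
    rw [this, mul_zero] at han; exact lt_irrefl _ han
  have hn : 0 < n := by exact_mod_cast hn0
  have ha1 : a < 1 := lt_trans hap hp1
  set m : ℕ := ⌈a * (n:ℝ)⌉₊ - 1 with hm_def
  have hceil1 : 1 ≤ ⌈a * (n:ℝ)⌉₊ := Nat.one_le_ceil_iff.mpr han
  have hm_succ : m + 1 = ⌈a * (n:ℝ)⌉₊ := by omega
  have hm1 : (m:ℝ) < a * n := by
    have h1 : (⌈a * (n:ℝ)⌉₊ : ℝ) < a * n + 1 := Nat.ceil_lt_add_one han.le
    have h2 : ((m:ℝ) + 1) = (⌈a * (n:ℝ)⌉₊ : ℝ) := by exact_mod_cast congrArg (Nat.cast (R := ℝ)) hm_succ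
    linarith
  have hm2 : a * n ≤ (m:ℝ) + 1 := by
    have h2 : ((m:ℝ) + 1) = (⌈a * (n:ℝ)⌉₊ : ℝ) := by exact_mod_cast congrArg (Nat.cast (R := ℝ)) hm_succ
    rw [h2]; exact Nat.le_ceil _
  have hman : (m:ℝ) < p * n := lt_of_lt_of_le hm1 (by nlinarith)
  have hmn : m < n := by
    have : (m:ℝ) < n := by nlinarith
    exact_mod_cast this
  have hk_iff : ∀ k : ℕ, ((k:ℝ) < a * n ↔ k ≤ m) := by
    intro k
    constructor
    · intro h
      have : (k:ℝ) < (m:ℝ) + 1 := lt_of_lt_of_le h hm2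
      have : k < m + 1 := by exact_mod_cast this
      omega
    · intro h
      have : (k:ℝ) ≤ m := by exact_mod_cast h
      linarith
  -- chain monotonicity up to m
  have chain : ∀ k, k ≤ m → binPMF n k p ≤ binPMF n m p := by
    have step : ∀ k, k + 1 ≤ m → binPMF n k p ≤ binPMF n (k+1) p := by
      intro k hk
      apply binPMF_step hp hp1
      have : ((k:ℝ) + 1) ≤ (m:ℝ) := by exact_mod_cast hk
      linarith
    have aux : ∀ d k, k + d ≤ m → binPMF n k p ≤ binPMF n (k + d) p := by
      intro d
      induction d with
      | zero => intro k _; simp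
      | succ e ih =>
        intro k hk
        have h1 : binPMF n k p ≤ binPMF n (k + e) p := ih k (by omega)
        have h2 : binPMF n (k + e) p ≤ binPMF n (k + e + 1) p := step (k + e) (by omega)
        have : k + (e + 1) = k + e + 1 := by omega
        rw [this]
        exact le_trans h1 h2
    intro k hk
    have := aux (m - k) k (by omega)
    rwa [Nat.add_sub_cancel' hk] at this
  -- Sanov-type bound at m
  have h1a : (0:ℝ) < 1 - a := by linarith
  have h1p : (0:ℝ) < 1 - p := by linarith
  have sanov : binPMF n m p ≤ (2:ℝ) ^ (-(n:ℝ) * klB a p) := by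
    -- choose bound
    have hC : (n.choose m : ℝ) * a ^ m * (1 - a) ^ (n - m) ≤ 1 := by
      have hexp : (a + (1 - a)) ^ n = ∑ k ∈ Finset.range (n+1), a ^ k * (1-a) ^ (n-k) * (n.choose k : ℝ) :=
        add_pow a (1-a) n
      have hsum1 : (∑ k ∈ Finset.range (n+1), a ^ k * (1-a) ^ (n-k) * (n.choose k : ℝ)) = 1 := by
        rw [← hexp]; norm_num
      have hmem : m ∈ Finset.range (n+1) := Finset.mem_range.mpr (by omega)
      have := Finset.single_le_sum (f := fun k => a ^ k * (1-a) ^ (n-k) * (n.choose k : ℝ))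
        (fun k _ => by positivity) hmem
      rw [hsum1] at this
      calc (n.choose m : ℝ) * a ^ m * (1 - a) ^ (n - m)
          = a ^ m * (1-a) ^ (n-m) * (n.choose m : ℝ) := by ring
        _ ≤ 1 := this
    have hAm : (0:ℝ) < a ^ m := by positivity
    have hBm : (0:ℝ) < (1 - a) ^ (n - m) := by positivity
    have hchoose : (n.choose m : ℝ) ≤ 1 / (a ^ m * (1 - a) ^ (n - m)) := by
      rw [le_div_iff₀ (by positivity)]
      calc (n.choose m : ℝ) * (a ^ m * (1 - a) ^ (n - m))
          = (n.choose m : ℝ) * a ^ m * (1 - a) ^ (n - m) := by ring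
        _ ≤ 1 := hC
    have hstep1 : binPMF n m p ≤ (p / a) ^ m * ((1 - p) / (1 - a)) ^ (n - m) := by
      unfold binPMF
      have : (p / a) ^ m * ((1 - p) / (1 - a)) ^ (n - m)
          = (1 / (a ^ m * (1 - a) ^ (n - m))) * (p ^ m * (1 - p) ^ (n - m)) := by
        rw [div_pow, div_pow]; field_simp
      rw [this]
      have hpn : (0:ℝ) ≤ p ^ m * (1 - p) ^ (n - m) := by positivity
      calc (n.choose m : ℝ) * p ^ m * (1 - p) ^ (n - m)
          = (n.choose m : ℝ) * (p ^ m * (1 - p) ^ (n - m)) := by ring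
        _ ≤ (1 / (a ^ m * (1 - a) ^ (n - m))) * (p ^ m * (1 - p) ^ (n - m)) :=
            mul_le_mul_of_nonneg_right hchoose hpn
    -- go to rpow with real exponents
    have hpa1 : (1:ℝ) ≤ p / a := (one_le_div ha0').mpr hap.le
    have hq0 : (0:ℝ) < (1 - p) / (1 - a) := by positivity
    have hq1 : (1 - p) / (1 - a) ≤ 1 := by
      rw [div_le_one h1a]; linarith
    have hnm_cast : ((n - m : ℕ) : ℝ) = (n:ℝ) - (m:ℝ) := by
      rw [Nat.cast_sub hmn.le]
    have hstep2 : (p / a) ^ m * ((1 - p) / (1 - a)) ^ (n - m)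
        ≤ (p / a) ^ (a * n) * ((1 - p) / (1 - a)) ^ ((1 - a) * n) := by
      have e1 : (p / a) ^ m = (p / a) ^ ((m:ℝ)) := (Real.rpow_natCast _ m).symm
      have e2 : ((1 - p) / (1 - a)) ^ (n - m) = ((1 - p) / (1 - a)) ^ (((n - m : ℕ)):ℝ) :=
        (Real.rpow_natCast _ (n - m)).symm
      rw [e1, e2, hnm_cast]
      have b1 : (p / a) ^ ((m:ℝ)) ≤ (p / a) ^ (a * n) :=
        Real.rpow_le_rpow_of_exponent_le hpa1 hm1.le
      have b2 : ((1 - p) / (1 - a)) ^ ((n:ℝ) - (m:ℝ)) ≤ ((1 - p) / (1 - a)) ^ ((1 - a) * n) :=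
        Real.rpow_le_rpow_of_exponent_ge hq0 hq1 (by nlinarith)
      have hrp1 : (0:ℝ) ≤ (p / a) ^ ((m:ℝ)) := (Real.rpow_pos_of_pos (by positivity) _).le
      have hrp2 : (0:ℝ) ≤ ((1 - p) / (1 - a)) ^ ((1 - a) * n) := (Real.rpow_pos_of_pos hq0 _).le
      exact mul_le_mul b1 b2 (Real.rpow_pos_of_pos hq0 _).le (Real.rpow_pos_of_pos (by positivity) _).le
    have hstep3 : (p / a) ^ (a * n) * ((1 - p) / (1 - a)) ^ ((1 - a) * n)
        = (2:ℝ) ^ (-(n:ℝ) * klB a p) := by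
      have h2 : (1:ℝ) < 2 := one_lt_two
      have e1 : (p / a) ^ (a * n) = (2:ℝ) ^ ((a * n) * Real.logb 2 (p / a)) := by
        conv_rhs => rw [mul_comm (a * (n:ℝ)), Real.rpow_mul (by norm_num : (0:ℝ) ≤ 2),
          Real.rpow_logb (by norm_num) (by norm_num) (by positivity : (0:ℝ) < p / a)]
      have e2 : ((1 - p) / (1 - a)) ^ ((1 - a) * n) = (2:ℝ) ^ (((1 - a) * n) * Real.logb 2 ((1 - p) / (1 - a))) := by
        conv_rhs => rw [mul_comm ((1-a) * (n:ℝ)), Real.rpow_mul (by norm_num : (0:ℝ) ≤ 2),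
          Real.rpow_logb (by norm_num) (by norm_num) hq0]
      rw [e1, e2, ← Real.rpow_add (by norm_num : (0:ℝ) < 2)]
      congr 1
      have l1 : Real.logb 2 (p / a) = - Real.logb 2 (a / p) := by
        rw [← Real.logb_inv]; congr 1; field_simp
      have l2 : Real.logb 2 ((1 - p) / (1 - a)) = - Real.logb 2 ((1 - a) / (1 - p)) := by
        rw [← Real.logb_inv]; congr 1; field_simp
      rw [l1, l2]; unfold klB; ring
    calc binPMF n m p ≤ (p / a) ^ m * ((1 - p) / (1 - a)) ^ (n - m) := hstep1
      _ ≤ (p / a) ^ (a * n) * ((1 - p) / (1 - a)) ^ ((1 - a) * n) := hstep2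
      _ = (2:ℝ) ^ (-(n:ℝ) * klB a p) := hstep3
  -- evaluate the exponential
  set M := max 0 (Real.logb 2 (p / (1 - p))) with hM_def
  have hM0 : 0 ≤ M := le_max_left _ _
  have hnkl : -(n:ℝ) * klB a p
      = -(Real.logb 2 r + Real.logb 2 (2 / δ) + 4 * Real.logb 2 ((n : ℝ) + 1) + M) := by
    rw [hkla]; field_simp
  have hr1 : (1:ℝ) ≤ (r:ℝ) := by exact_mod_cast hr
  have hexp_eval : (2:ℝ) ^ (-(n:ℝ) * klB a p)
      = (1 / r) * (δ / 2) * (1 / ((n:ℝ)+1)^(4:ℕ)) * (2:ℝ) ^ (-M) := by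
    have E1 : (2:ℝ) ^ (-Real.logb 2 (r:ℝ)) = 1 / (r:ℝ) := by
      rw [Real.rpow_neg (by norm_num), Real.rpow_logb (by norm_num) (by norm_num) (by linarith), one_div]
    have E2 : (2:ℝ) ^ (-Real.logb 2 (2 / δ)) = δ / 2 := by
      rw [Real.rpow_neg (by norm_num), Real.rpow_logb (by norm_num) (by norm_num) (by positivity), inv_div]
    have E3 : (2:ℝ) ^ (-(4 * Real.logb 2 ((n:ℝ)+1))) = 1 / ((n:ℝ)+1)^(4:ℕ) := by
      rw [Real.rpow_neg (by norm_num), one_div]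
      congr 1
      rw [show (4:ℝ) * Real.logb 2 ((n:ℝ)+1) = Real.logb 2 ((n:ℝ)+1) * ((4:ℕ):ℝ) from by push_cast; ring,
        Real.rpow_mul (by norm_num), Real.rpow_natCast,
        Real.rpow_logb (by norm_num) (by norm_num) (by positivity)]
    rw [hnkl,
      show -(Real.logb 2 (r:ℝ) + Real.logb 2 (2 / δ) + 4 * Real.logb 2 ((n : ℝ) + 1) + M)
        = (-Real.logb 2 (r:ℝ)) + (-Real.logb 2 (2 / δ)) + (-(4 * Real.logb 2 ((n : ℝ) + 1))) + (-M) from by ring,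
      Real.rpow_add (by norm_num : (0:ℝ) < 2), Real.rpow_add (by norm_num : (0:ℝ) < 2),
      Real.rpow_add (by norm_num : (0:ℝ) < 2), E1, E2, E3]
  -- final real inequality
  set S := ∑ k ∈ Finset.range (m+1), binPMF n k p with hS_def
  have hS_nonneg : 0 ≤ S := Finset.sum_nonneg (fun k _ => binPMF_nonneg hp.le hp1.le)
  have hS_le : S ≤ ((m:ℝ)+1) * binPMF n m p := by
    have : ∀ k ∈ Finset.range (m+1), binPMF n k p ≤ binPMF n m p := by
      intro k hk
      exact chain k (by simpa [Nat.lt_succ_iff] using Finset.mem_range.mp hk)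
    calc S ≤ ∑ _k ∈ Finset.range (m+1), binPMF n m p := Finset.sum_le_sum this
      _ = ((m:ℝ)+1) * binPMF n m p := by rw [Finset.sum_const, Finset.card_range]; push_cast; ring
  have final_real : (r:ℝ) * S ≤ δ / 2 := by
    have hb_nonneg : 0 ≤ binPMF n m p := binPMF_nonneg hp.le hp1.le
    have h1 : (r:ℝ) * S ≤ (r:ℝ) * (((m:ℝ)+1) * binPMF n m p) :=
      mul_le_mul_of_nonneg_left hS_le (by positivity)
    have h2 : (r:ℝ) * (((m:ℝ)+1) * binPMF n m p) ≤ (r:ℝ) * (((n:ℝ)+1) * ((2:ℝ) ^ (-(n:ℝ) * klB a p))) := by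
      apply mul_le_mul_of_nonneg_left _ (by positivity)
      have hmn' : (m:ℝ) + 1 ≤ (n:ℝ) + 1 := by
        have : (m:ℝ) ≤ n := by exact_mod_cast hmn.le
        linarith
      have := mul_le_mul hmn' sanov hb_nonneg (by positivity)
      exact this
    have h3 : (r:ℝ) * (((n:ℝ)+1) * ((2:ℝ) ^ (-(n:ℝ) * klB a p))) ≤ δ / 2 := by
      rw [hexp_eval]
      have hM1 : (2:ℝ) ^ (-M) ≤ 1 := by
        rw [show (1:ℝ) = (2:ℝ) ^ (0:ℝ) from (Real.rpow_zero 2).symm]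
        exact Real.rpow_le_rpow_of_exponent_le one_le_two (by linarith)
      have hn4 : (n:ℝ) + 1 ≤ ((n:ℝ)+1)^(4:ℕ) := by
        have h1n : (1:ℝ) ≤ (n:ℝ) + 1 := by linarith [Nat.cast_nonneg (α := ℝ) n]
        exact le_self_pow₀ h1n (by norm_num)
      have hM1pos : (0:ℝ) < (2:ℝ) ^ (-M) := Real.rpow_pos_of_pos (by norm_num) _
      have h4pos : (0:ℝ) < ((n:ℝ)+1)^(4:ℕ) := by positivity
      have key : (r:ℝ) * (((n:ℝ)+1) * ((1 / r) * (δ / 2) * (1 / ((n:ℝ)+1)^(4:ℕ)) * (2:ℝ) ^ (-M)))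
          = (δ / 2) * (((n:ℝ)+1) / ((n:ℝ)+1)^(4:ℕ)) * (2:ℝ) ^ (-M) := by
        field_simp
      rw [key]
      have hfrac : ((n:ℝ)+1) / ((n:ℝ)+1)^(4:ℕ) ≤ 1 := by
        rw [div_le_one h4pos]; exact hn4
      calc (δ / 2) * (((n:ℝ)+1) / ((n:ℝ)+1)^(4:ℕ)) * (2:ℝ) ^ (-M)
          ≤ (δ / 2) * 1 * 1 := by
            apply mul_le_mul
            · apply mul_le_mul_of_nonneg_left hfrac (by positivity)
            · exact hM1
            · exact hM1pos.le
            · positivity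
        _ = δ / 2 := by ring
    linarith
  -- measure-theoretic part
  have hCi : ∀ i, μ {ω | (X i ω : ℝ) < a * n} ≤ ENNReal.ofReal S := by
    intro i
    have hsub : {ω | (X i ω : ℝ) < a * n} ⊆ ⋃ k ∈ Finset.range (m+1), {ω | X i ω = k} := by
      intro ω hω
      simp only [Set.mem_setOf_eq] at hω
      simp only [Set.mem_iUnion]
      refine ⟨X i ω, ?_, rfl⟩
      have := (hk_iff (X i ω)).mp hω
      exact Finset.mem_range.mpr (by omega)
    calc μ {ω | (X i ω : ℝ) < a * n}
        ≤ μ (⋃ k ∈ Finset.range (m+1), {ω | X i ω = k}) := measure_mono hsub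
      _ ≤ ∑ k ∈ Finset.range (m+1), μ {ω | X i ω = k} := measure_biUnion_finset_le _ _
      _ = ∑ k ∈ Finset.range (m+1), ENNReal.ofReal (binPMF n k p) := by
          refine Finset.sum_congr rfl (fun k _ => hmarg i k)
      _ = ENNReal.ofReal S :=
          (ENNReal.ofReal_sum_of_nonneg (fun k _ => binPMF_nonneg hp.le hp1.le)).symm
  have hevent : {ω | ∃ i, (X i ω : ℝ) < a * n} = ⋃ i, {ω | (X i ω : ℝ) < a * n} := by
    ext ω; simp
  have hmu : μ {ω | ∃ i, (X i ω : ℝ) < a * n} ≤ ENNReal.ofReal (δ / 2) := by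
    rw [hevent]
    calc μ (⋃ i, {ω | (X i ω : ℝ) < a * n})
        ≤ ∑' i : Fin r, μ {ω | (X i ω : ℝ) < a * n} := measure_iUnion_le _
      _ = ∑ i : Fin r, μ {ω | (X i ω : ℝ) < a * n} := tsum_fintype _
      _ ≤ ∑ _i : Fin r, ENNReal.ofReal S := Finset.sum_le_sum (fun i _ => hCi i)
      _ = (r : ENNReal) * ENNReal.ofReal S := by
          rw [Finset.sum_const, Finset.card_univ, Fintype.card_fin, nsmul_eq_mul]
      _ = ENNReal.ofReal ((r:ℝ) * S) := by
          rw [ENNReal.ofReal_mul (Nat.cast_nonneg r), ENNReal.ofReal_natCast]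
      _ ≤ ENNReal.ofReal (δ / 2) := ENNReal.ofReal_le_ofReal final_real
  have := ENNReal.toReal_mono ENNReal.ofReal_ne_top hmu
  rwa [ENNReal.toReal_ofReal (by positivity)] at this
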